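/- Let −1/2 < α < 1/2 and let θ > 0 satisfy 1/(1+θ) < α + 1/2. There is a constant C = C(α,θ) such that for every measurable f ≥ 0 on (0,∞) and every x > 0: Ψ^{α,0}_{*,E} f(x) ≤ C ( [D(f^{1+θ})(x)]^{1/(1+θ)} + [R(f^{1+θ})(x)]^{1/(1+θ)} ). -/

import Mathlib

open MeasureTheory Set Filter
open scoped ENNReal NNReal

noncomputable def PsiE (a b t x z : ℝ) : ℝ :=
  if |x - z| < t ∧ t < x + z then
    (x * z) ^ (-(2*a) - b) * t ^ (-(2*a) - 2*b) *
      ((t ^ 2 - (x - z) ^ 2) * ((x + z) ^ 2 - t ^ 2)) ^ (a + b - 1/2)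
  else 0

noncomputable def PsiStarE (a b : ℝ) (f : ℝ → ℝ) (x : ℝ) : ℝ≥0∞ :=
  ⨆ t ∈ Set.Ioi (0 : ℝ),
    ∫⁻ z in Set.Ioi (0 : ℝ), ENNReal.ofReal (PsiE a b t x z * f z * z ^ (2 * a + 1))

noncomputable def Dop (f : ℝ → ℝ) (x : ℝ) : ℝ≥0∞ :=
  ⨆ (A : ℝ) (B : ℝ) (_ : 0 ≤ A) (_ : A < x) (_ : x < B),
    (ENNReal.ofReal (B ^ 2 - A ^ 2))⁻¹ * ∫⁻ z in Set.Ioo A B, ENNReal.ofReal (z * |f z|)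

noncomputable def Rop (f : ℝ → ℝ) (x : ℝ) : ℝ≥0∞ :=
  ⨆ t ∈ Set.Ioi (2 * x),
    (ENNReal.ofReal (2 * x))⁻¹ * ∫⁻ z in Set.Icc (t - x) (t + x), ENNReal.ofReal |f z|

section Aux

lemma lint_rpow {γ : ℝ} (hγ : -1 < γ) {d : ℝ} (hd : 0 < d) :
    ∫⁻ u in Set.Ioo (0:ℝ) d, ENNReal.ofReal (u ^ γ) = ENNReal.ofReal (d ^ (γ+1) / (γ+1)) := by
  have hγ1 : (0:ℝ) < γ + 1 := by linarith
  have hint : IntervalIntegrable (fun u : ℝ => u ^ γ) volume 0 d :=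
    intervalIntegral.intervalIntegrable_rpow' hγ
  have h1 : ∫ u in (0:ℝ)..d, u ^ γ = d ^ (γ+1) / (γ+1) := by
    rw [integral_rpow (Or.inl hγ), Real.zero_rpow (by positivity)]
    ring
  have h2 : ∫ u in (0:ℝ)..d, u ^ γ = ∫ u in Set.Ioc (0:ℝ) d, u ^ γ :=
    intervalIntegral.integral_of_le hd.le
  have h3 : ENNReal.ofReal (∫ u in Set.Ioc (0:ℝ) d, u ^ γ)
      = ∫⁻ u in Set.Ioc (0:ℝ) d, ENNReal.ofReal (u ^ γ) := by
    apply MeasureTheory.ofReal_integral_eq_lintegral_ofReal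
    · exact hint.1
    · exact (ae_restrict_iff' measurableSet_Ioc).2
        (ae_of_all _ fun u hu => Real.rpow_nonneg hu.1.le γ)
  have h4 : ∫⁻ u in Set.Ioo (0:ℝ) d, ENNReal.ofReal (u ^ γ)
      = ∫⁻ u in Set.Ioc (0:ℝ) d, ENNReal.ofReal (u ^ γ) := by
    exact setLIntegral_congr Ioo_ae_eq_Ioc
  rw [h4, ← h3, ← h2, h1]

lemma lint_shift (γ c d : ℝ) :
    ∫⁻ z in Set.Ioo c d, ENNReal.ofReal ((z - c) ^ γ)
      = ∫⁻ u in Set.Ioo (0:ℝ) (d - c), ENNReal.ofReal (u ^ γ) := by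
  set g : ℝ → ℝ≥0∞ := (Set.Ioo (0:ℝ) (d - c)).indicator (fun u => ENNReal.ofReal (u ^ γ)) with hgdef
  have key : ∀ z : ℝ, (Set.Ioo c d).indicator (fun z => ENNReal.ofReal ((z - c) ^ γ)) z
      = g (z + (-c)) := by
    intro z
    have hmem : z + (-c) ∈ Set.Ioo (0:ℝ) (d - c) ↔ z ∈ Set.Ioo c d := by
      simp only [Set.mem_Ioo]
      constructor <;> intro h <;> constructor <;> linarith [h.1, h.2]
    by_cases h : z ∈ Set.Ioo c d
    · rw [Set.indicator_of_mem h, hgdef, Set.indicator_of_mem (hmem.2 h)]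
      rw [sub_eq_add_neg]
    · rw [Set.indicator_of_notMem h, hgdef, Set.indicator_of_notMem (fun hh => h (hmem.1 hh))]
  calc ∫⁻ z in Set.Ioo c d, ENNReal.ofReal ((z - c) ^ γ)
      = ∫⁻ z, (Set.Ioo c d).indicator (fun z => ENNReal.ofReal ((z - c) ^ γ)) z := by
        rw [lintegral_indicator measurableSet_Ioo]
    _ = ∫⁻ z, g (z + (-c)) := lintegral_congr key
    _ = ∫⁻ z, g z := lintegral_add_right_eq_self g (-c)
    _ = ∫⁻ u in Set.Ioo (0:ℝ) (d - c), ENNReal.ofReal (u ^ γ) := by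
        rw [hgdef, lintegral_indicator measurableSet_Ioo]

lemma lint_reflect (γ c d : ℝ) :
    ∫⁻ z in Set.Ioo c d, ENNReal.ofReal ((d - z) ^ γ)
      = ∫⁻ u in Set.Ioo (0:ℝ) (d - c), ENNReal.ofReal (u ^ γ) := by
  have hg0 : Measurable fun u : ℝ => ENNReal.ofReal (u ^ γ) :=
    (measurable_id.pow measurable_const).ennreal_ofReal
  set g : ℝ → ℝ≥0∞ := (Set.Ioo (0:ℝ) (d - c)).indicator (fun u => ENNReal.ofReal (u ^ γ)) with hgdef
  have hg : Measurable g := hg0.indicator measurableSet_Ioo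
  have key : ∀ z : ℝ, (Set.Ioo c d).indicator (fun z => ENNReal.ofReal ((d - z) ^ γ)) z
      = g (-(z + (-d))) := by
    intro z
    have hmem : -(z + (-d)) ∈ Set.Ioo (0:ℝ) (d - c) ↔ z ∈ Set.Ioo c d := by
      simp only [Set.mem_Ioo]
      constructor <;> intro h <;> constructor <;> linarith [h.1, h.2]
    by_cases h : z ∈ Set.Ioo c d
    · rw [Set.indicator_of_mem h, hgdef, Set.indicator_of_mem (hmem.2 h)]
      ring_nf
    · rw [Set.indicator_of_notMem h, hgdef, Set.indicator_of_notMem (fun hh => h (hmem.1 hh))]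
  calc ∫⁻ z in Set.Ioo c d, ENNReal.ofReal ((d - z) ^ γ)
      = ∫⁻ z, (Set.Ioo c d).indicator (fun z => ENNReal.ofReal ((d - z) ^ γ)) z := by
        rw [lintegral_indicator measurableSet_Ioo]
    _ = ∫⁻ z, g (-(z + (-d))) := lintegral_congr key
    _ = ∫⁻ w, g (-w) := lintegral_add_right_eq_self (fun w => g (-w)) (-d)
    _ = ∫⁻ w, g w := (Measure.measurePreserving_neg (volume : Measure ℝ)).lintegral_comp hg
    _ = ∫⁻ u in Set.Ioo (0:ℝ) (d - c), ENNReal.ofReal (u ^ γ) := by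
        rw [hgdef, lintegral_indicator measurableSet_Ioo]

lemma beta_bound {γ : ℝ} (hγ1 : -1 < γ) (hγ2 : γ ≤ 0) {c d : ℝ} (h : c < d) :
    ∫⁻ z in Set.Ioo c d, ENNReal.ofReal (((z - c) * (d - z)) ^ γ)
      ≤ ENNReal.ofReal ((2 / (γ + 1)) * ((d - c) / 2) ^ (2 * γ + 1)) := by
  have hγp : (0:ℝ) < γ + 1 := by linarith
  set m := (c + d) / 2 with hm
  set e := (d - c) / 2 with he
  have he0 : 0 < e := by simp only [he]; linarith
  have hcm : c < m := by simp only [hm]; linarith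
  have hmd : m < d := by simp only [hm]; linarith
  have hmc : m - c = e := by simp only [hm, he]; ring
  have hdm : d - m = e := by simp only [hm, he]; ring
  have h1 : ∫⁻ z in Set.Ioo c m, ENNReal.ofReal (((z - c) * (d - z)) ^ γ)
      ≤ ENNReal.ofReal (e ^ γ) * ENNReal.ofReal (e ^ (γ + 1) / (γ + 1)) := by
    have hpt : ∀ z ∈ Set.Ioo c m, ENNReal.ofReal (((z - c) * (d - z)) ^ γ)
        ≤ ENNReal.ofReal (e ^ γ) * ENNReal.ofReal ((z - c) ^ γ) := by
      intro z hz
      rw [← ENNReal.ofReal_mul (Real.rpow_nonneg he0.le _)]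
      apply ENNReal.ofReal_le_ofReal
      rw [Real.mul_rpow (by linarith [hz.1]) (by linarith [hz.2, hmd]), mul_comm]
      apply mul_le_mul_of_nonneg_right _ (Real.rpow_nonneg (by linarith [hz.1]) _)
      exact Real.rpow_le_rpow_of_nonpos he0 (by linarith [hz.2]) hγ2
    calc ∫⁻ z in Set.Ioo c m, ENNReal.ofReal (((z - c) * (d - z)) ^ γ)
        ≤ ∫⁻ z in Set.Ioo c m, ENNReal.ofReal (e ^ γ) * ENNReal.ofReal ((z - c) ^ γ) := by
          exact setLIntegral_mono ((measurable_const.mul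
            ((measurable_id.sub measurable_const).pow measurable_const).ennreal_ofReal)) hpt
      _ = ENNReal.ofReal (e ^ γ) * ∫⁻ z in Set.Ioo c m, ENNReal.ofReal ((z - c) ^ γ) :=
          lintegral_const_mul _ ((measurable_id.sub measurable_const).pow
            measurable_const).ennreal_ofReal
      _ = ENNReal.ofReal (e ^ γ) * ENNReal.ofReal (e ^ (γ + 1) / (γ + 1)) := by
          rw [lint_shift, hmc, lint_rpow hγ1 he0]
  have h2 : ∫⁻ z in Set.Ico m d, ENNReal.ofReal (((z - c) * (d - z)) ^ γ)
      ≤ ENNReal.ofReal (e ^ γ) * ENNReal.ofReal (e ^ (γ + 1) / (γ + 1)) := by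
    have hIco : ∫⁻ z in Set.Ico m d, ENNReal.ofReal (((z - c) * (d - z)) ^ γ)
        = ∫⁻ z in Set.Ioo m d, ENNReal.ofReal (((z - c) * (d - z)) ^ γ) :=
      (setLIntegral_congr Ioo_ae_eq_Ico).symm
    rw [hIco]
    have hpt : ∀ z ∈ Set.Ioo m d, ENNReal.ofReal (((z - c) * (d - z)) ^ γ)
        ≤ ENNReal.ofReal (e ^ γ) * ENNReal.ofReal ((d - z) ^ γ) := by
      intro z hz
      rw [← ENNReal.ofReal_mul (Real.rpow_nonneg he0.le _)]
      apply ENNReal.ofReal_le_ofReal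
      rw [Real.mul_rpow (by linarith [hz.1, hcm]) (by linarith [hz.2])]
      apply mul_le_mul_of_nonneg_right _ (Real.rpow_nonneg (by linarith [hz.2]) _)
      exact Real.rpow_le_rpow_of_nonpos he0 (by linarith [hz.1, hmc.ge, hmc.le]) hγ2
    calc ∫⁻ z in Set.Ioo m d, ENNReal.ofReal (((z - c) * (d - z)) ^ γ)
        ≤ ∫⁻ z in Set.Ioo m d, ENNReal.ofReal (e ^ γ) * ENNReal.ofReal ((d - z) ^ γ) := by
          exact setLIntegral_mono ((measurable_const.mul
            ((measurable_const.sub measurable_id).pow measurable_const).ennreal_ofReal)) hpt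
      _ = ENNReal.ofReal (e ^ γ) * ∫⁻ z in Set.Ioo m d, ENNReal.ofReal ((d - z) ^ γ) :=
          lintegral_const_mul _ ((measurable_const.sub measurable_id).pow
            measurable_const).ennreal_ofReal
      _ = ENNReal.ofReal (e ^ γ) * ENNReal.ofReal (e ^ (γ + 1) / (γ + 1)) := by
          rw [lint_reflect, hdm, lint_rpow hγ1 he0]
  have hsub : Set.Ioo c d ⊆ Set.Ioo c m ∪ Set.Ico m d := by
    intro z hz
    rcases lt_or_ge z m with h' | h'
    · exact Or.inl ⟨hz.1, h'⟩
    · exact Or.inr ⟨h', hz.2⟩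
  have hdisj : Disjoint (Set.Ioo c m) (Set.Ico m d) := by
    apply Set.disjoint_left.2
    intro z hz hz'
    exact absurd hz.2 (not_lt.2 hz'.1)
  have key : ENNReal.ofReal (e ^ γ) * ENNReal.ofReal (e ^ (γ + 1) / (γ + 1))
      = ENNReal.ofReal (e ^ (2 * γ + 1) / (γ + 1)) := by
    rw [← ENNReal.ofReal_mul (Real.rpow_nonneg he0.le _)]
    congr 1
    rw [mul_div_assoc', ← Real.rpow_add he0]
    ring_nf
  calc ∫⁻ z in Set.Ioo c d, ENNReal.ofReal (((z - c) * (d - z)) ^ γ)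
      ≤ ∫⁻ z in (Set.Ioo c m ∪ Set.Ico m d), ENNReal.ofReal (((z - c) * (d - z)) ^ γ) :=
        lintegral_mono_set hsub
    _ = (∫⁻ z in Set.Ioo c m, ENNReal.ofReal (((z - c) * (d - z)) ^ γ))
        + ∫⁻ z in Set.Ico m d, ENNReal.ofReal (((z - c) * (d - z)) ^ γ) :=
        lintegral_union measurableSet_Ico hdisj
    _ ≤ ENNReal.ofReal (e ^ (2 * γ + 1) / (γ + 1)) + ENNReal.ofReal (e ^ (2 * γ + 1) / (γ + 1)) := by
        rw [← key]; exact add_le_add h1 h2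
    _ = ENNReal.ofReal ((2 / (γ + 1)) * ((d - c) / 2) ^ (2 * γ + 1)) := by
        rw [← ENNReal.ofReal_add (by positivity) (by positivity), ← he]
        congr 1
        ring

lemma holder_ofReal {p q : ℝ} (hpq : Real.HolderConjugate p q) {μ : Measure ℝ} {f g : ℝ → ℝ}
    (hf : AEMeasurable f μ) (hg : AEMeasurable g μ) :
    ∫⁻ z, ENNReal.ofReal (f z * g z) ∂μ ≤
      (∫⁻ z, ENNReal.ofReal (|f z| ^ p) ∂μ) ^ (1/p) *
        (∫⁻ z, ENNReal.ofReal (|g z| ^ q) ∂μ) ^ (1/q) := by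
  have h1 : ∫⁻ z, ENNReal.ofReal (f z * g z) ∂μ
      ≤ ∫⁻ z, ENNReal.ofReal |f z| * ENNReal.ofReal |g z| ∂μ := by
    apply lintegral_mono
    intro z
    simp only []
    rw [← ENNReal.ofReal_mul (abs_nonneg _), ← abs_mul]
    exact ENNReal.ofReal_le_ofReal (le_abs_self _)
  have h2 := ENNReal.lintegral_mul_le_Lp_mul_Lq μ hpq
    ((continuous_abs.measurable.comp_aemeasurable hf).ennreal_ofReal)
    ((continuous_abs.measurable.comp_aemeasurable hg).ennreal_ofReal)
  simp only [Pi.mul_apply] at h2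
  refine h1.trans (h2.trans (le_of_eq ?_))
  congr 1
  · congr 1
    apply lintegral_congr
    intro z
    simp only [Function.comp_apply]
    rw [ENNReal.ofReal_rpow_of_nonneg (abs_nonneg _) hpq.nonneg]
  · congr 1
    apply lintegral_congr
    intro z
    simp only [Function.comp_apply]
    rw [ENNReal.ofReal_rpow_of_nonneg (abs_nonneg _) hpq.symm.nonneg]

lemma two_bound {u v e : ℝ} (hu : 0 < u) (huv : u ≤ v) (hv2 : v ≤ 2*u)
    (he2 : e ≤ 1) : v ^ e ≤ 2 * u ^ e := by
  rcases le_or_gt 0 e with he | he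
  · calc v ^ e ≤ (2*u) ^ e := Real.rpow_le_rpow (by linarith) hv2 he
      _ = 2 ^ e * u ^ e := Real.mul_rpow (by norm_num) hu.le
      _ ≤ 2 * u ^ e := by
          have h2 : (2:ℝ) ^ e ≤ 2 ^ (1:ℝ) := Real.rpow_le_rpow_of_exponent_le one_le_two he2
          rw [Real.rpow_one] at h2
          exact mul_le_mul_of_nonneg_right h2 (Real.rpow_nonneg hu.le e)
  · calc v ^ e ≤ u ^ e := Real.rpow_le_rpow_of_nonpos hu huv he.le
      _ ≤ 2 * u ^ e := by nlinarith [Real.rpow_nonneg hu.le e]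

lemma kernel_pt_bound {aa q γ pinv x t z L b P : ℝ}
    (hx : 0 < x) (hz : 0 < z) (ht : 0 < t) (hb0 : 0 < b)
    (hγ2 : γ ≤ 0) (hγ1 : 0 ≤ γ + 1)
    (hzb : z ≤ b) (hQ1 : 0 < z - L) (hQ2 : 0 < b - z) (hL0 : 0 ≤ L)
    (hP : P = ((z - L) * (b - z)) * ((z + L) * (b + z))) (hPpos : 0 < P)
    (hγdef : γ = (aa - 1/2) * q)
    (hexp : -(2*aa)*q + (2*aa+1-pinv)*q + γ = γ + 1) :
    ((x*z) ^ (-(2*aa)) * t ^ (-(2*aa)) * P ^ (aa - 1/2) * z ^ (2*aa+1-pinv)) ^ q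
      ≤ x ^ (-(2*aa)*q) * t ^ (-(2*aa)*q) * b ^ (2*γ+1) * ((z - L) * (b - z)) ^ γ := by
  have hxz : 0 < x * z := mul_pos hx hz
  have hQ : 0 < (z - L) * (b - z) := mul_pos hQ1 hQ2
  have hS : 0 < (z + L) * (b + z) := by nlinarith
  have e1 : ((x*z) ^ (-(2*aa)) * t ^ (-(2*aa)) * P ^ (aa - 1/2) * z ^ (2*aa+1-pinv)) ^ q
      = (x*z) ^ (-(2*aa)*q) * t ^ (-(2*aa)*q) * P ^ ((aa-1/2)*q) * z ^ ((2*aa+1-pinv)*q) := by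
    rw [Real.mul_rpow (by positivity) (Real.rpow_nonneg hz.le _),
        Real.mul_rpow (by positivity) (Real.rpow_nonneg hPpos.le _),
        Real.mul_rpow (Real.rpow_nonneg hxz.le _) (Real.rpow_nonneg ht.le _),
        ← Real.rpow_mul hxz.le, ← Real.rpow_mul ht.le, ← Real.rpow_mul hPpos.le,
        ← Real.rpow_mul hz.le]
  rw [e1, ← hγdef]
  have e2 : P ^ γ = ((z-L)*(b-z)) ^ γ * ((z+L)*(b+z)) ^ γ := by
    rw [hP, Real.mul_rpow hQ.le hS.le]
  have e3 : ((z+L)*(b+z)) ^ γ ≤ (z*b) ^ γ := by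
    apply Real.rpow_le_rpow_of_nonpos (by positivity) (by nlinarith) hγ2
  have e4 : (z*b : ℝ) ^ γ = z ^ γ * b ^ γ := Real.mul_rpow hz.le hb0.le
  have e5 : (x*z) ^ (-(2*aa)*q) = x ^ (-(2*aa)*q) * z ^ (-(2*aa)*q) :=
    Real.mul_rpow hx.le hz.le
  have e6 : z ^ (-(2*aa)*q) * z ^ ((2*aa+1-pinv)*q) * z ^ γ = z ^ (γ + 1) := by
    rw [← Real.rpow_add hz, ← Real.rpow_add hz]
    exact congrArg (fun w : ℝ => z ^ w) hexp
  have e7 : z ^ (γ+1) ≤ b ^ (γ+1) := Real.rpow_le_rpow hz.le hzb hγ1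
  have e8 : b ^ γ * b ^ (γ+1) = b ^ (2*γ+1) := by
    rw [← Real.rpow_add hb0]; congr 1; ring
  calc (x*z) ^ (-(2*aa)*q) * t ^ (-(2*aa)*q) * P ^ γ * z ^ ((2*aa+1-pinv)*q)
      = x ^ (-(2*aa)*q) * z ^ (-(2*aa)*q) * t ^ (-(2*aa)*q) * (((z-L)*(b-z)) ^ γ * ((z+L)*(b+z)) ^ γ)
        * z ^ ((2*aa+1-pinv)*q) := by rw [e2, e5]
    _ ≤ x ^ (-(2*aa)*q) * z ^ (-(2*aa)*q) * t ^ (-(2*aa)*q) * (((z-L)*(b-z)) ^ γ * (z ^ γ * b ^ γ))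
        * z ^ ((2*aa+1-pinv)*q) := by
        have hmono : ((z+L)*(b+z)) ^ γ ≤ z ^ γ * b ^ γ := by rw [← e4]; exact e3
        have hnn : (0:ℝ) ≤ x ^ (-(2*aa)*q) * z ^ (-(2*aa)*q) * t ^ (-(2*aa)*q) := by positivity
        have hnn2 : (0:ℝ) ≤ ((z-L)*(b-z)) ^ γ := Real.rpow_nonneg hQ.le _
        have hnn3 : (0:ℝ) ≤ z ^ ((2*aa+1-pinv)*q) := Real.rpow_nonneg hz.le _
        nlinarith [Real.rpow_nonneg hz.le γ, Real.rpow_nonneg hb0.le γ,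
          mul_le_mul_of_nonneg_left hmono hnn2,
          mul_le_mul_of_nonneg_left (mul_le_mul_of_nonneg_left hmono hnn2) hnn,
          Real.rpow_nonneg hxz.le (-(2*aa)*q)]
    _ = x ^ (-(2*aa)*q) * t ^ (-(2*aa)*q) * (b ^ γ * (z ^ (-(2*aa)*q) * z ^ ((2*aa+1-pinv)*q) * z ^ γ))
        * ((z-L)*(b-z)) ^ γ := by ring
    _ = x ^ (-(2*aa)*q) * t ^ (-(2*aa)*q) * (b ^ γ * z ^ (γ+1)) * ((z-L)*(b-z)) ^ γ := by rw [e6]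
    _ ≤ x ^ (-(2*aa)*q) * t ^ (-(2*aa)*q) * (b ^ γ * b ^ (γ+1)) * ((z-L)*(b-z)) ^ γ := by
        apply mul_le_mul_of_nonneg_right _ (Real.rpow_nonneg hQ.le _)
        apply mul_le_mul_of_nonneg_left _ (by positivity)
        exact mul_le_mul_of_nonneg_left e7 (Real.rpow_nonneg hb0.le _)
    _ = x ^ (-(2*aa)*q) * t ^ (-(2*aa)*q) * b ^ (2*γ+1) * ((z-L)*(b-z)) ^ γ := by rw [e8]

lemma kernel_pt_bound_R {aa q γ x t z L b P : ℝ}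
    (hx : 0 < x) (hz : 0 < z) (ht : 0 < t)
    (hγ2 : γ ≤ 0) (hq0 : 0 ≤ q)
    (hzb : z ≤ b) (hQ1 : 0 < z - L) (hQ2 : 0 < b - z) (hL0 : 0 ≤ L)
    (hSt : t*t ≤ (z + L) * (b + z)) (hb32 : b ≤ 3/2 * t)
    (hP : P = ((z - L) * (b - z)) * ((z + L) * (b + z))) (hPpos : 0 < P)
    (hγdef : γ = (aa - 1/2) * q) :
    ((x*z) ^ (-(2*aa)) * t ^ (-(2*aa)) * P ^ (aa-1/2) * z ^ (2*aa+1)) ^ q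
      ≤ x ^ (-(2*aa)*q) * (t ^ (-(2*aa)*q) * (t*t) ^ γ * (3/2*t) ^ q) * ((z-L)*(b-z)) ^ γ := by
  have hxz : 0 < x * z := mul_pos hx hz
  have hQ : 0 < (z - L) * (b - z) := mul_pos hQ1 hQ2
  have hS : 0 < (z + L) * (b + z) := by nlinarith
  have e1 : ((x*z) ^ (-(2*aa)) * t ^ (-(2*aa)) * P ^ (aa - 1/2) * z ^ (2*aa+1)) ^ q
      = (x*z) ^ (-(2*aa)*q) * t ^ (-(2*aa)*q) * P ^ ((aa-1/2)*q) * z ^ ((2*aa+1)*q) := by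
    rw [Real.mul_rpow (by positivity) (Real.rpow_nonneg hz.le _),
        Real.mul_rpow (by positivity) (Real.rpow_nonneg hPpos.le _),
        Real.mul_rpow (Real.rpow_nonneg hxz.le _) (Real.rpow_nonneg ht.le _),
        ← Real.rpow_mul hxz.le, ← Real.rpow_mul ht.le, ← Real.rpow_mul hPpos.le,
        ← Real.rpow_mul hz.le]
  rw [e1, ← hγdef]
  have e2 : P ^ γ = ((z-L)*(b-z)) ^ γ * ((z+L)*(b+z)) ^ γ := by
    rw [hP, Real.mul_rpow hQ.le hS.le]
  have e3 : ((z+L)*(b+z)) ^ γ ≤ (t*t) ^ γ :=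
    Real.rpow_le_rpow_of_nonpos (by positivity) hSt hγ2
  have e5 : (x*z) ^ (-(2*aa)*q) = x ^ (-(2*aa)*q) * z ^ (-(2*aa)*q) :=
    Real.mul_rpow hx.le hz.le
  have e6 : z ^ (-(2*aa)*q) * z ^ ((2*aa+1)*q) = z ^ q := by
    rw [← Real.rpow_add hz]
    exact congrArg (fun w : ℝ => z ^ w) (by ring)
  have e7 : z ^ q ≤ (3/2*t) ^ q :=
    Real.rpow_le_rpow hz.le (le_trans hzb hb32) hq0
  calc (x*z) ^ (-(2*aa)*q) * t ^ (-(2*aa)*q) * P ^ γ * z ^ ((2*aa+1)*q)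
      = x ^ (-(2*aa)*q) * z ^ (-(2*aa)*q) * t ^ (-(2*aa)*q)
          * (((z-L)*(b-z)) ^ γ * ((z+L)*(b+z)) ^ γ) * z ^ ((2*aa+1)*q) := by rw [e2, e5]
    _ = x ^ (-(2*aa)*q) * t ^ (-(2*aa)*q) * ((z+L)*(b+z)) ^ γ
          * (z ^ (-(2*aa)*q) * z ^ ((2*aa+1)*q)) * ((z-L)*(b-z)) ^ γ := by ring
    _ = x ^ (-(2*aa)*q) * t ^ (-(2*aa)*q) * ((z+L)*(b+z)) ^ γ * z ^ q * ((z-L)*(b-z)) ^ γ := by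
        rw [e6]
    _ ≤ x ^ (-(2*aa)*q) * t ^ (-(2*aa)*q) * (t*t) ^ γ * (3/2*t) ^ q * ((z-L)*(b-z)) ^ γ := by
        have h1 : ((z+L)*(b+z)) ^ γ * z ^ q ≤ (t*t) ^ γ * (3/2*t) ^ q := by
          apply mul_le_mul e3 e7 (Real.rpow_nonneg hz.le _) (Real.rpow_nonneg (by positivity) _)
        have hnn : (0:ℝ) ≤ x ^ (-(2*aa)*q) * t ^ (-(2*aa)*q) := by positivity
        have hnn2 : (0:ℝ) ≤ ((z-L)*(b-z)) ^ γ := Real.rpow_nonneg hQ.le _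
        calc x ^ (-(2*aa)*q) * t ^ (-(2*aa)*q) * ((z+L)*(b+z)) ^ γ * z ^ q * ((z-L)*(b-z)) ^ γ
            = (x ^ (-(2*aa)*q) * t ^ (-(2*aa)*q)) * (((z+L)*(b+z)) ^ γ * z ^ q)
              * ((z-L)*(b-z)) ^ γ := by ring
          _ ≤ (x ^ (-(2*aa)*q) * t ^ (-(2*aa)*q)) * ((t*t) ^ γ * (3/2*t) ^ q)
              * ((z-L)*(b-z)) ^ γ := by
              exact mul_le_mul_of_nonneg_right
                (mul_le_mul_of_nonneg_left h1 hnn) hnn2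
          _ = x ^ (-(2*aa)*q) * t ^ (-(2*aa)*q) * (t*t) ^ γ * (3/2*t) ^ q
              * ((z-L)*(b-z)) ^ γ := by ring
    _ = x ^ (-(2*aa)*q) * (t ^ (-(2*aa)*q) * (t*t) ^ γ * (3/2*t) ^ q) * ((z-L)*(b-z)) ^ γ := by
        ring

lemma f_to_Dop {F : ℝ → ℝ} {x A B : ℝ} (h0 : 0 ≤ A) (hA : A < x) (hB : x < B) :
    ∫⁻ z in Set.Ioo A B, ENNReal.ofReal (z * |F z|)
      ≤ ENNReal.ofReal (B ^ 2 - A ^ 2) * Dop F x := by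
  set c := ENNReal.ofReal (B ^ 2 - A ^ 2) with hc
  have hBA : 0 < B ^ 2 - A ^ 2 := by nlinarith
  have hc0 : c ≠ 0 := by simp only [hc, ne_eq, ENNReal.ofReal_eq_zero, not_le]; exact hBA
  have hctop : c ≠ ⊤ := ENNReal.ofReal_ne_top
  have hle : c⁻¹ * ∫⁻ z in Set.Ioo A B, ENNReal.ofReal (z * |F z|) ≤ Dop F x := by
    rw [Dop]
    apply le_iSup_of_le A
    apply le_iSup_of_le B
    apply le_iSup_of_le h0
    apply le_iSup_of_le hA
    apply le_iSup_of_le hB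
    exact le_rfl
  calc ∫⁻ z in Set.Ioo A B, ENNReal.ofReal (z * |F z|)
      = c * (c⁻¹ * ∫⁻ z in Set.Ioo A B, ENNReal.ofReal (z * |F z|)) := by
        rw [← mul_assoc, ENNReal.mul_inv_cancel hc0 hctop, one_mul]
    _ ≤ c * Dop F x := mul_le_mul' le_rfl hle

lemma f_to_Rop {F : ℝ → ℝ} {x t : ℝ} (hx : 0 < x) (ht : 2 * x < t) :
    ∫⁻ z in Set.Icc (t - x) (t + x), ENNReal.ofReal |F z|
      ≤ ENNReal.ofReal (2 * x) * Rop F x := by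
  set c := ENNReal.ofReal (2 * x) with hc
  have hc0 : c ≠ 0 := by simp only [hc, ne_eq, ENNReal.ofReal_eq_zero, not_le]; linarith
  have hctop : c ≠ ⊤ := ENNReal.ofReal_ne_top
  have hle : c⁻¹ * ∫⁻ z in Set.Icc (t - x) (t + x), ENNReal.ofReal |F z| ≤ Rop F x := by
    rw [Rop]
    apply le_iSup_of_le t
    apply le_iSup_of_le ht
    exact le_rfl
  calc ∫⁻ z in Set.Icc (t - x) (t + x), ENNReal.ofReal |F z|
      = c * (c⁻¹ * ∫⁻ z in Set.Icc (t - x) (t + x), ENNReal.ofReal |F z|) := by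
        rw [← mul_assoc, ENNReal.mul_inv_cancel hc0 hctop, one_mul]
    _ ≤ c * Rop F x := mul_le_mul' le_rfl hle

end Aux

set_option maxHeartbeats 1000000 in
/-- control of Ψ^{α,0}_{*,E} by D and R. -/
theorem PsiStarE_beta_zero_controlled (a θ : ℝ) (ha1 : -(1/2) < a) (ha2 : a < 1/2)
    (hθ : 0 < θ) (hθ2 : 1/(1 + θ) < a + 1/2) :
    ∃ C : ℝ≥0, ∀ f : ℝ → ℝ, Measurable f → (∀ z, 0 ≤ f z) → ∀ x : ℝ, 0 < x →
      PsiStarE a 0 f x ≤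
        C * ((Dop (fun z => f z ^ (1 + θ)) x) ^ (1/(1 + θ)) +
          (Rop (fun z => f z ^ (1 + θ)) x) ^ (1/(1 + θ))) := by
  have hθ1 : (0:ℝ) < 1 + θ := by linarith
  set p : ℝ := 1 + θ with hpdef
  have hp1 : 1 < p := by rw [hpdef]; linarith
  set q : ℝ := Real.conjExponent p with hqdef
  have hpq : p.HolderConjugate q := Real.HolderConjugate.conjExponent hp1
  have hq1 : 1 < q := hpq.symm.lt
  have hp0 : 0 < p := hpq.pos
  have hq0 : 0 < q := hpq.symm.pos
  have hinv : 1/p + 1/q = 1 := by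
    have h := hpq.inv_add_inv_eq_one
    rw [inv_eq_one_div, inv_eq_one_div] at h
    exact h
  set γ : ℝ := (a - 1/2) * q with hγdef
  have hγ2 : γ ≤ 0 := by
    rw [hγdef]
    apply mul_nonpos_of_nonpos_of_nonneg (by linarith) hq0.le
  have hγ1 : -1 < γ := by
    have h1 : 1/2 - a < 1/q := by linarith
    have h2 : (1/2 - a) * q < (1/q) * q := mul_lt_mul_of_pos_right h1 hq0
    rw [one_div_mul_cancel hq0.ne'] at h2
    rw [hγdef]; nlinarith
  have hγp : (0:ℝ) < γ + 1 := by linarith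
  set Kγ : ℝ := 2 / (γ + 1) with hKγdef
  have hKγ0 : 0 < Kγ := by rw [hKγdef]; positivity
  set C₁ : ℝ := 9 ^ (1/p) * (2*Kγ) ^ (1/q) with hC₁
  set C₂ : ℝ := 2 ^ (1/p) * ((3/2) ^ q * Kγ) ^ (1/q) with hC₂
  have hC₁0 : 0 ≤ C₁ := by rw [hC₁]; positivity
  have hC₂0 : 0 ≤ C₂ := by rw [hC₂]; positivity
  -- exponent arithmetic
  clear_value p q γ Kγ C₁ C₂
  have hq1p : (1 - 1/p) * q = 1 := by
    rw [show (1:ℝ) - 1/p = 1/q by linarith, one_div, inv_mul_cancel₀ hq0.ne']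
  have hexpD : -(2*a)*q + (2*a+1-1/p)*q + γ = γ + 1 := by linear_combination hq1p
  have hsum : 1/p + (1-q)*(1/q) = 0 := by
    have hq' : q * (1/q) = 1 := by rw [one_div, mul_inv_cancel₀ hq0.ne']
    nlinarith [hinv, hq']
  refine ⟨(max C₁ C₂).toNNReal, ?_⟩
  intro f hfm hf0 x hx
  have hcoe : ((max C₁ C₂).toNNReal : ℝ≥0∞) = ENNReal.ofReal (max C₁ C₂) := rfl
  rw [hcoe]
  rw [PsiStarE]
  refine iSup₂_le fun t ht => ?_
  rw [Set.mem_Ioi] at ht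
  set F : ℝ → ℝ := fun z => f z ^ p with hF
  set D : ℝ≥0∞ := Dop F x with hD
  set R : ℝ≥0∞ := Rop F x with hR
  set L : ℝ := |x - t| with hLdef
  set b : ℝ := x + t with hbdef
  have hb0 : 0 < b := by rw [hbdef]; linarith
  have hL0 : 0 ≤ L := abs_nonneg _
  have hLb : L < b := by
    rw [hLdef, hbdef]
    exact abs_lt.2 ⟨by linarith, by linarith⟩
  have hxb : x < b := by rw [hbdef]; linarith
  have hiff : ∀ z : ℝ, (|x - z| < t ∧ t < x + z) ↔ z ∈ Set.Ioo L b := by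
    intro z
    rw [Set.mem_Ioo, hLdef, hbdef, abs_lt, abs_lt]
    constructor
    · rintro ⟨⟨h1, h2⟩, h3⟩
      exact ⟨⟨by linarith, by linarith⟩, by linarith⟩
    · rintro ⟨⟨h1, h2⟩, h3⟩
      exact ⟨⟨by linarith, by linarith⟩, by linarith⟩
  have hfacts : ∀ z ∈ Set.Ioo L b, 0 < z ∧ 0 < t^2 - (x-z)^2 ∧ 0 < (x+z)^2 - t^2 := by
    intro z hz
    have hz0 : 0 < z := lt_of_le_of_lt hL0 hz.1
    have hcond := (hiff z).2 hz
    refine ⟨hz0, ?_, ?_⟩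
    · nlinarith [sq_abs (x - z), abs_nonneg (x - z), hcond.1]
    · have h1 : 0 < x + z - t := by linarith [hcond.2]
      have h2 : 0 < x + z + t := by linarith [hcond.2, ht]
      nlinarith [mul_pos h1 h2]
  have hPfact : ∀ z : ℝ, (t^2 - (x-z)^2) * ((x+z)^2 - t^2)
      = ((z - L)*(b - z)) * ((z + L)*(b + z)) := by
    intro z
    have hL2 : L^2 = (x - t)^2 := by rw [hLdef]; exact sq_abs _
    rw [hbdef]
    linear_combination ((x + t)^2 - z^2) * hL2
  rcases le_or_gt t (2*x) with hcase | hcase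
  · -- local case: use Dop
    obtain ⟨A, hA0, hAx, hAL, hAbd⟩ : ∃ A : ℝ, 0 ≤ A ∧ A < x ∧ A ≤ L ∧ b^2 - A^2 ≤ 9*(x*t) := by
      rcases lt_or_eq_of_le hcase with hlt | heq
      · refine ⟨L, hL0, ?_, le_rfl, ?_⟩
        · rw [hLdef]; exact abs_lt.2 ⟨by linarith, by linarith⟩
        · have hL2 : L^2 = (x - t)^2 := by rw [hLdef]; exact sq_abs _
          rw [hbdef]
          nlinarith [mul_pos hx ht]
      · refine ⟨x/2, by linarith, by linarith, ?_, ?_⟩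
        · rw [hLdef, heq, show x - 2*x = -x by ring, abs_neg, abs_of_pos hx]; linarith
        · rw [hbdef, heq]; nlinarith [sq_nonneg x, hx.le]
    have h1p0 : (0:ℝ) ≤ 1/p := one_div_nonneg.mpr hp0.le
    have h1q0 : (0:ℝ) ≤ 1/q := one_div_nonneg.mpr hq0.le
    set g1 : ℝ → ℝ := fun z => f z * z ^ (1/p) with hg1
    set h1 : ℝ → ℝ := fun z => (x*z) ^ (-(2*a)) * t ^ (-(2*a)) *
        ((t^2 - (x-z)^2) * ((x+z)^2 - t^2)) ^ (a - 1/2) * z ^ (2*a+1-1/p) with hh1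
    have hg1m : Measurable g1 := by rw [hg1]; fun_prop
    have hh1m : Measurable h1 := by rw [hh1]; fun_prop
    have stepA : ∫⁻ z in Set.Ioi (0:ℝ), ENNReal.ofReal (PsiE a 0 t x z * f z * z ^ (2*a+1))
        = ∫⁻ z in Set.Ioo L b, ENNReal.ofReal (g1 z * h1 z) := by
      calc ∫⁻ z in Set.Ioi (0:ℝ), ENNReal.ofReal (PsiE a 0 t x z * f z * z ^ (2*a+1))
          = ∫⁻ z in Set.Ioi (0:ℝ),
              (Set.Ioo L b).indicator (fun z => ENNReal.ofReal (g1 z * h1 z)) z := by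
            apply setLIntegral_congr_fun measurableSet_Ioi
            intro z hz
            rw [Set.mem_Ioi] at hz
            by_cases hmem : z ∈ Set.Ioo L b
            · rw [Set.indicator_of_mem hmem]
              simp only [PsiE, if_pos ((hiff z).2 hmem), hg1, hh1]
              congr 1
              have hsplit : z ^ (2*a+1) = z ^ (1/p) * z ^ (2*a+1-1/p) := by
                rw [← Real.rpow_add hz]; congr 1; ring
              simp only [mul_zero, sub_zero, add_zero]
              rw [hsplit]; ring
            · rw [Set.indicator_of_notMem hmem]
              simp only [PsiE, if_neg (fun hc => hmem ((hiff z).1 hc))]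
              simp
        _ = ∫⁻ z in Set.Ioo L b ∩ Set.Ioi 0, ENNReal.ofReal (g1 z * h1 z) :=
            setLIntegral_indicator measurableSet_Ioo _
        _ = ∫⁻ z in Set.Ioo L b, ENNReal.ofReal (g1 z * h1 z) := by
            have hss : Set.Ioo L b ∩ Set.Ioi 0 = Set.Ioo L b := by
              apply Set.inter_eq_left.2
              intro z hz
              exact Set.mem_Ioi.mpr (lt_of_le_of_lt hL0 hz.1)
            rw [hss]
    have hHold : ∫⁻ z in Set.Ioo L b, ENNReal.ofReal (g1 z * h1 z)
        ≤ (∫⁻ z in Set.Ioo L b, ENNReal.ofReal (|g1 z| ^ p)) ^ (1/p) *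
          (∫⁻ z in Set.Ioo L b, ENNReal.ofReal (|h1 z| ^ q)) ^ (1/q) :=
      holder_ofReal hpq hg1m.aemeasurable hh1m.aemeasurable
    have hFA : (∫⁻ z in Set.Ioo L b, ENNReal.ofReal (|g1 z| ^ p))
        ≤ ENNReal.ofReal (9*(x*t)) * D := by
      have hcong : ∀ z ∈ Set.Ioo L b,
          ENNReal.ofReal (|g1 z| ^ p) = ENNReal.ofReal (z * |F z|) := by
        intro z hz
        have hz0 : 0 < z := (hfacts z hz).1
        congr 1
        simp only [hg1, hF]
        rw [abs_of_nonneg (mul_nonneg (hf0 z) (Real.rpow_nonneg hz0.le _)),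
            abs_of_nonneg (Real.rpow_nonneg (hf0 z) _),
            Real.mul_rpow (hf0 z) (Real.rpow_nonneg hz0.le _),
            ← Real.rpow_mul hz0.le, one_div_mul_cancel hp0.ne', Real.rpow_one, mul_comm]
      calc ∫⁻ z in Set.Ioo L b, ENNReal.ofReal (|g1 z| ^ p)
          = ∫⁻ z in Set.Ioo L b, ENNReal.ofReal (z * |F z|) :=
            setLIntegral_congr_fun measurableSet_Ioo hcong
        _ ≤ ∫⁻ z in Set.Ioo A b, ENNReal.ofReal (z * |F z|) :=
            lintegral_mono_set (Set.Ioo_subset_Ioo hAL le_rfl)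
        _ ≤ ENNReal.ofReal (b^2 - A^2) * Dop F x := f_to_Dop hA0 hAx hxb
        _ ≤ ENNReal.ofReal (9*(x*t)) * D := by
            rw [hD]
            exact mul_le_mul' (ENNReal.ofReal_le_ofReal hAbd) le_rfl
    set Mx : ℝ := x ^ (-(2*a)*q) * t ^ (-(2*a)*q) * b ^ (2*γ+1) with hMx
    have hMx0 : 0 ≤ Mx := by
      rw [hMx]
      exact mul_nonneg (mul_nonneg (Real.rpow_nonneg hx.le _) (Real.rpow_nonneg ht.le _))
        (Real.rpow_nonneg hb0.le _)
    have hFBpt : ∀ z ∈ Set.Ioo L b, ENNReal.ofReal (|h1 z| ^ q)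
        ≤ ENNReal.ofReal Mx * ENNReal.ofReal (((z - L)*(b - z)) ^ γ) := by
      intro z hz
      obtain ⟨hz0, hP1, hP2⟩ := hfacts z hz
      have hQ1 : 0 < z - L := sub_pos.2 hz.1
      have hQ2 : 0 < b - z := sub_pos.2 hz.2
      have hPpos : 0 < (t^2 - (x-z)^2) * ((x+z)^2 - t^2) := mul_pos hP1 hP2
      have habs : |h1 z| = h1 z := by
        simp only [hh1]
        exact abs_of_nonneg (mul_nonneg (mul_nonneg (mul_nonneg
          (Real.rpow_nonneg (mul_nonneg hx.le hz0.le) _) (Real.rpow_nonneg ht.le _))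
          (Real.rpow_nonneg hPpos.le _)) (Real.rpow_nonneg hz0.le _))
      rw [habs, ← ENNReal.ofReal_mul hMx0]
      apply ENNReal.ofReal_le_ofReal
      have hker := kernel_pt_bound (aa := a) (q := q) (γ := γ) (pinv := 1/p)
        hx hz0 ht hb0 hγ2 hγp.le hz.2.le hQ1 hQ2 hL0 (hPfact z) hPpos hγdef hexpD
      simp only [hh1, hMx]
      exact hker
    have hbeta := beta_bound hγ1 hγ2 hLb
    have hmin : (b - L)/2 = min x t := by
      rcases le_total x t with h | h
      · rw [hLdef, hbdef, abs_of_nonpos (by linarith), min_eq_left h]; ring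
      · rw [hLdef, hbdef, abs_of_nonneg (by linarith), min_eq_right h]; ring
    have hm0 : 0 < min x t := lt_min hx ht
    have hbm1 : x*t ≤ b * min x t := by
      rcases le_total x t with h | h
      · rw [min_eq_left h, hbdef]; nlinarith
      · rw [min_eq_right h, hbdef]; nlinarith
    have hbm2 : b * min x t ≤ 2*(x*t) := by
      rcases le_total x t with h | h
      · rw [min_eq_left h, hbdef]; nlinarith
      · rw [min_eq_right h, hbdef]; nlinarith
    have h2b : (b * min x t) ^ (2*γ+1) ≤ 2 * (x*t) ^ (2*γ+1) :=
      two_bound (mul_pos hx ht) hbm1 hbm2 (by linarith)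
    have hrealD : Mx * (Kγ * ((b - L)/2) ^ (2*γ+1)) ≤ 2*Kγ*(x*t)^(1-q) := by
      rw [hmin, hMx]
      calc x ^ (-(2*a)*q) * t ^ (-(2*a)*q) * b ^ (2*γ+1) * (Kγ * (min x t) ^ (2*γ+1))
          = Kγ * (x ^ (-(2*a)*q) * t ^ (-(2*a)*q)) * (b ^ (2*γ+1) * (min x t) ^ (2*γ+1)) := by
            ring
        _ = Kγ * (x ^ (-(2*a)*q) * t ^ (-(2*a)*q)) * (b * min x t) ^ (2*γ+1) := by
            rw [Real.mul_rpow hb0.le hm0.le]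
        _ ≤ Kγ * (x ^ (-(2*a)*q) * t ^ (-(2*a)*q)) * (2 * (x*t) ^ (2*γ+1)) := by
            apply mul_le_mul_of_nonneg_left h2b
            exact mul_nonneg hKγ0.le
              (mul_nonneg (Real.rpow_nonneg hx.le _) (Real.rpow_nonneg ht.le _))
        _ = 2*Kγ* ((x ^ (-(2*a)*q) * x ^ (2*γ+1)) * (t ^ (-(2*a)*q) * t ^ (2*γ+1))) := by
            rw [Real.mul_rpow hx.le ht.le]; ring
        _ = 2*Kγ*(x*t)^(1-q) := by
            rw [← Real.rpow_add hx, ← Real.rpow_add ht,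
              show -(2*a)*q + (2*γ+1) = 1 - q by rw [hγdef]; ring,
              Real.mul_rpow hx.le ht.le]
    have hFB : (∫⁻ z in Set.Ioo L b, ENNReal.ofReal (|h1 z| ^ q))
        ≤ ENNReal.ofReal (2*Kγ*(x*t)^(1-q)) := by
      calc ∫⁻ z in Set.Ioo L b, ENNReal.ofReal (|h1 z| ^ q)
          ≤ ∫⁻ z in Set.Ioo L b, ENNReal.ofReal Mx * ENNReal.ofReal (((z - L)*(b - z)) ^ γ) :=
            setLIntegral_mono (measurable_const.mul (((measurable_id.sub measurable_const).mul
              (measurable_const.sub measurable_id)).pow measurable_const).ennreal_ofReal) hFBpt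
        _ = ENNReal.ofReal Mx * ∫⁻ z in Set.Ioo L b, ENNReal.ofReal (((z - L)*(b - z)) ^ γ) :=
            lintegral_const_mul _ (((measurable_id.sub measurable_const).mul
              (measurable_const.sub measurable_id)).pow measurable_const).ennreal_ofReal
        _ ≤ ENNReal.ofReal Mx * ENNReal.ofReal ((2/(γ+1)) * ((b - L)/2) ^ (2*γ+1)) :=
            mul_le_mul' le_rfl hbeta
        _ = ENNReal.ofReal (Mx * (Kγ * ((b - L)/2) ^ (2*γ+1))) := by
            rw [hKγdef, ← ENNReal.ofReal_mul hMx0]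
        _ ≤ ENNReal.ofReal (2*Kγ*(x*t)^(1-q)) := ENNReal.ofReal_le_ofReal hrealD
    have hxt : 0 < x*t := mul_pos hx ht
    have hCrealD : (9*(x*t)) ^ (1/p) * (2*Kγ*(x*t) ^ (1-q)) ^ (1/q) = C₁ := by
      calc (9*(x*t)) ^ (1/p) * (2*Kγ*(x*t) ^ (1-q)) ^ (1/q)
          = (9 ^ (1/p) * (x*t) ^ (1/p)) * ((2*Kγ) ^ (1/q) * ((x*t) ^ (1-q)) ^ (1/q)) := by
            rw [Real.mul_rpow (by norm_num) hxt.le,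
                Real.mul_rpow (by positivity) (Real.rpow_nonneg hxt.le _)]
        _ = (9 ^ (1/p) * (2*Kγ) ^ (1/q)) * ((x*t) ^ (1/p) * (x*t) ^ ((1-q)*(1/q))) := by
            rw [← Real.rpow_mul hxt.le]; ring
        _ = C₁ := by
            rw [← Real.rpow_add hxt, hsum, Real.rpow_zero, mul_one, hC₁]
    calc ∫⁻ z in Set.Ioi (0:ℝ), ENNReal.ofReal (PsiE a 0 t x z * f z * z ^ (2*a+1))
        = ∫⁻ z in Set.Ioo L b, ENNReal.ofReal (g1 z * h1 z) := stepA
      _ ≤ (∫⁻ z in Set.Ioo L b, ENNReal.ofReal (|g1 z| ^ p)) ^ (1/p) *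
          (∫⁻ z in Set.Ioo L b, ENNReal.ofReal (|h1 z| ^ q)) ^ (1/q) := hHold
      _ ≤ (ENNReal.ofReal (9*(x*t)) * D) ^ (1/p) *
          (ENNReal.ofReal (2*Kγ*(x*t)^(1-q))) ^ (1/q) :=
          mul_le_mul' (ENNReal.rpow_le_rpow hFA h1p0) (ENNReal.rpow_le_rpow hFB h1q0)
      _ = (ENNReal.ofReal ((9*(x*t)) ^ (1/p)) *
            ENNReal.ofReal ((2*Kγ*(x*t)^(1-q)) ^ (1/q))) * D ^ (1/p) := by
          rw [ENNReal.mul_rpow_of_nonneg _ _ h1p0,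
              ENNReal.ofReal_rpow_of_nonneg (by positivity) h1p0,
              ENNReal.ofReal_rpow_of_nonneg (by positivity) h1q0]
          ring
      _ = ENNReal.ofReal C₁ * D ^ (1/p) := by
          rw [← ENNReal.ofReal_mul (by positivity), hCrealD]
      _ ≤ ENNReal.ofReal (max C₁ C₂) * (D ^ (1/p) + R ^ (1/p)) :=
          mul_le_mul' (ENNReal.ofReal_le_ofReal (le_max_left _ _)) le_self_add
  · -- remote case: use Rop
    have h1p0 : (0:ℝ) ≤ 1/p := one_div_nonneg.mpr hp0.le
    have h1q0 : (0:ℝ) ≤ 1/q := one_div_nonneg.mpr hq0.le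
    have hLeq : L = t - x := by rw [hLdef, abs_of_nonpos (by linarith)]; ring
    set h1 : ℝ → ℝ := fun z => (x*z) ^ (-(2*a)) * t ^ (-(2*a)) *
        ((t^2 - (x-z)^2) * ((x+z)^2 - t^2)) ^ (a - 1/2) * z ^ (2*a+1) with hh1
    have hh1m : Measurable h1 := by rw [hh1]; fun_prop
    have stepA : ∫⁻ z in Set.Ioi (0:ℝ), ENNReal.ofReal (PsiE a 0 t x z * f z * z ^ (2*a+1))
        = ∫⁻ z in Set.Ioo L b, ENNReal.ofReal (f z * h1 z) := by
      calc ∫⁻ z in Set.Ioi (0:ℝ), ENNReal.ofReal (PsiE a 0 t x z * f z * z ^ (2*a+1))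
          = ∫⁻ z in Set.Ioi (0:ℝ),
              (Set.Ioo L b).indicator (fun z => ENNReal.ofReal (f z * h1 z)) z := by
            apply setLIntegral_congr_fun measurableSet_Ioi
            intro z hz
            rw [Set.mem_Ioi] at hz
            by_cases hmem : z ∈ Set.Ioo L b
            · rw [Set.indicator_of_mem hmem]
              simp only [PsiE, if_pos ((hiff z).2 hmem), hh1]
              congr 1
              simp only [mul_zero, sub_zero, add_zero]
              ring
            · rw [Set.indicator_of_notMem hmem]
              simp only [PsiE, if_neg (fun hc => hmem ((hiff z).1 hc))]
              simp
        _ = ∫⁻ z in Set.Ioo L b ∩ Set.Ioi 0, ENNReal.ofReal (f z * h1 z) :=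
            setLIntegral_indicator measurableSet_Ioo _
        _ = ∫⁻ z in Set.Ioo L b, ENNReal.ofReal (f z * h1 z) := by
            have hss : Set.Ioo L b ∩ Set.Ioi 0 = Set.Ioo L b := by
              apply Set.inter_eq_left.2
              intro z hz
              exact Set.mem_Ioi.mpr (lt_of_le_of_lt hL0 hz.1)
            rw [hss]
    have hHold : ∫⁻ z in Set.Ioo L b, ENNReal.ofReal (f z * h1 z)
        ≤ (∫⁻ z in Set.Ioo L b, ENNReal.ofReal (|f z| ^ p)) ^ (1/p) *
          (∫⁻ z in Set.Ioo L b, ENNReal.ofReal (|h1 z| ^ q)) ^ (1/q) :=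
      holder_ofReal hpq hfm.aemeasurable hh1m.aemeasurable
    have hFA : (∫⁻ z in Set.Ioo L b, ENNReal.ofReal (|f z| ^ p))
        ≤ ENNReal.ofReal (2*x) * R := by
      have hcong : ∀ z : ℝ, ENNReal.ofReal (|f z| ^ p) = ENNReal.ofReal |F z| := by
        intro z
        congr 1
        simp only [hF]
        rw [abs_of_nonneg (hf0 z), abs_of_nonneg (Real.rpow_nonneg (hf0 z) _)]
      have hsub : Set.Ioo L b ⊆ Set.Icc (t - x) (t + x) := by
        intro z hz
        obtain ⟨hz1, hz2⟩ := hz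
        rw [hLeq] at hz1
        have hb' : b = x + t := hbdef
        rw [hb'] at hz2
        exact ⟨by linarith, by linarith⟩
      calc ∫⁻ z in Set.Ioo L b, ENNReal.ofReal (|f z| ^ p)
          = ∫⁻ z in Set.Ioo L b, ENNReal.ofReal |F z| := lintegral_congr fun z => hcong z
        _ ≤ ∫⁻ z in Set.Icc (t - x) (t + x), ENNReal.ofReal |F z| := lintegral_mono_set hsub
        _ ≤ ENNReal.ofReal (2*x) * R := by
            rw [hR]
            exact f_to_Rop hx hcase
    set Mx : ℝ := x ^ (-(2*a)*q) * (t ^ (-(2*a)*q) * (t*t) ^ γ * (3/2*t) ^ q) with hMx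
    have hMx0 : 0 ≤ Mx := by
      rw [hMx]
      exact mul_nonneg (Real.rpow_nonneg hx.le _) (mul_nonneg (mul_nonneg
        (Real.rpow_nonneg ht.le _) (Real.rpow_nonneg (by positivity) _))
        (Real.rpow_nonneg (by positivity) _))
    have hFBpt : ∀ z ∈ Set.Ioo L b, ENNReal.ofReal (|h1 z| ^ q)
        ≤ ENNReal.ofReal Mx * ENNReal.ofReal (((z - L)*(b - z)) ^ γ) := by
      intro z hz
      obtain ⟨hz0, hP1, hP2⟩ := hfacts z hz
      have hQ1 : 0 < z - L := sub_pos.2 hz.1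
      have hQ2 : 0 < b - z := sub_pos.2 hz.2
      have hPpos : 0 < (t^2 - (x-z)^2) * ((x+z)^2 - t^2) := mul_pos hP1 hP2
      have hzL : t - x < z := by rw [← hLeq]; exact hz.1
      have hs1 : t ≤ z + L := by rw [hLeq]; linarith
      have hs2 : t ≤ b + z := by
        have hb' : b = x + t := hbdef
        rw [hb']; linarith
      have hSt : t*t ≤ (z + L) * (b + z) :=
        mul_le_mul hs1 hs2 ht.le (le_trans ht.le hs1)
      have hb32 : b ≤ 3/2*t := by
        have hb' : b = x + t := hbdef
        rw [hb']; linarith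
      have habs : |h1 z| = h1 z := by
        simp only [hh1]
        exact abs_of_nonneg (mul_nonneg (mul_nonneg (mul_nonneg
          (Real.rpow_nonneg (mul_nonneg hx.le hz0.le) _) (Real.rpow_nonneg ht.le _))
          (Real.rpow_nonneg hPpos.le _)) (Real.rpow_nonneg hz0.le _))
      rw [habs, ← ENNReal.ofReal_mul hMx0]
      apply ENNReal.ofReal_le_ofReal
      have hker := kernel_pt_bound_R (aa := a) (q := q) (γ := γ)
        hx hz0 ht hγ2 hq0.le hz.2.le hQ1 hQ2 hL0 hSt hb32 (hPfact z) hPpos hγdef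
      simp only [hh1, hMx]
      exact hker
    have hbeta := beta_bound hγ1 hγ2 hLb
    have hbL2 : (b - L)/2 = x := by
      rw [hLeq]
      have hb' : b = x + t := hbdef
      rw [hb']; ring
    have hrealR : Mx * (Kγ * x ^ (2*γ+1)) = (3/2)^q * Kγ * x ^ (1-q) := by
      rw [hMx, Real.mul_rpow ht.le ht.le, Real.mul_rpow (by norm_num : (0:ℝ) ≤ 3/2) ht.le]
      rw [show x ^ (-(2*a)*q) * (t ^ (-(2*a)*q) * (t ^ γ * t ^ γ) * ((3/2) ^ q * t ^ q))
            * (Kγ * x ^ (2*γ+1))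
          = (3/2)^q * Kγ * ((x ^ (-(2*a)*q) * x ^ (2*γ+1))
            * (t ^ (-(2*a)*q) * t ^ γ * t ^ γ * t ^ q)) from by ring]
      rw [← Real.rpow_add hx, ← Real.rpow_add ht, ← Real.rpow_add ht, ← Real.rpow_add ht]
      rw [show -(2*a)*q + (2*γ+1) = 1 - q by rw [hγdef]; ring,
          show -(2*a)*q + γ + γ + q = 0 by rw [hγdef]; ring, Real.rpow_zero, mul_one]
    have hFB : (∫⁻ z in Set.Ioo L b, ENNReal.ofReal (|h1 z| ^ q))
        ≤ ENNReal.ofReal ((3/2)^q * Kγ * x ^ (1-q)) := by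
      calc ∫⁻ z in Set.Ioo L b, ENNReal.ofReal (|h1 z| ^ q)
          ≤ ∫⁻ z in Set.Ioo L b, ENNReal.ofReal Mx * ENNReal.ofReal (((z - L)*(b - z)) ^ γ) :=
            setLIntegral_mono (measurable_const.mul (((measurable_id.sub measurable_const).mul
              (measurable_const.sub measurable_id)).pow measurable_const).ennreal_ofReal) hFBpt
        _ = ENNReal.ofReal Mx * ∫⁻ z in Set.Ioo L b, ENNReal.ofReal (((z - L)*(b - z)) ^ γ) :=
            lintegral_const_mul _ (((measurable_id.sub measurable_const).mul
              (measurable_const.sub measurable_id)).pow measurable_const).ennreal_ofReal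
        _ ≤ ENNReal.ofReal Mx * ENNReal.ofReal ((2/(γ+1)) * ((b - L)/2) ^ (2*γ+1)) :=
            mul_le_mul' le_rfl hbeta
        _ = ENNReal.ofReal (Mx * (Kγ * ((b - L)/2) ^ (2*γ+1))) := by
            rw [hKγdef, ← ENNReal.ofReal_mul hMx0]
        _ = ENNReal.ofReal ((3/2)^q * Kγ * x ^ (1-q)) := by
            rw [hbL2, hrealR]
    have hCrealR : (2*x) ^ (1/p) * ((3/2)^q * Kγ * x ^ (1-q)) ^ (1/q) = C₂ := by
      calc (2*x) ^ (1/p) * ((3/2)^q * Kγ * x ^ (1-q)) ^ (1/q)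
          = (2 ^ (1/p) * x ^ (1/p)) * (((3/2)^q*Kγ) ^ (1/q) * (x ^ (1-q)) ^ (1/q)) := by
            rw [Real.mul_rpow (by norm_num) hx.le,
                Real.mul_rpow (by positivity) (Real.rpow_nonneg hx.le _)]
        _ = (2 ^ (1/p) * ((3/2)^q*Kγ) ^ (1/q)) * (x ^ (1/p) * x ^ ((1-q)*(1/q))) := by
            rw [← Real.rpow_mul hx.le]; ring
        _ = C₂ := by
            rw [← Real.rpow_add hx, hsum, Real.rpow_zero, mul_one, hC₂]
    calc ∫⁻ z in Set.Ioi (0:ℝ), ENNReal.ofReal (PsiE a 0 t x z * f z * z ^ (2*a+1))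
        = ∫⁻ z in Set.Ioo L b, ENNReal.ofReal (f z * h1 z) := stepA
      _ ≤ (∫⁻ z in Set.Ioo L b, ENNReal.ofReal (|f z| ^ p)) ^ (1/p) *
          (∫⁻ z in Set.Ioo L b, ENNReal.ofReal (|h1 z| ^ q)) ^ (1/q) := hHold
      _ ≤ (ENNReal.ofReal (2*x) * R) ^ (1/p) *
          (ENNReal.ofReal ((3/2)^q * Kγ * x ^ (1-q))) ^ (1/q) :=
          mul_le_mul' (ENNReal.rpow_le_rpow hFA h1p0) (ENNReal.rpow_le_rpow hFB h1q0)
      _ = (ENNReal.ofReal ((2*x) ^ (1/p)) *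
            ENNReal.ofReal (((3/2)^q * Kγ * x ^ (1-q)) ^ (1/q))) * R ^ (1/p) := by
          rw [ENNReal.mul_rpow_of_nonneg _ _ h1p0,
              ENNReal.ofReal_rpow_of_nonneg (by positivity) h1p0,
              ENNReal.ofReal_rpow_of_nonneg (by positivity) h1q0]
          ring
      _ = ENNReal.ofReal C₂ * R ^ (1/p) := by
          rw [← ENNReal.ofReal_mul (by positivity), hCrealR]
      _ ≤ ENNReal.ofReal (max C₁ C₂) * (D ^ (1/p) + R ^ (1/p)) :=
          mul_le_mul' (ENNReal.ofReal_le_ofReal (le_max_right _ _)) le_add_self
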